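/- If a semantics S satisfies the epistemic splitting property, then S satisfies subjective constraint monotonicity: for any ground program Π and any set C of subjective constraints (rules ⊥ ← L1,…,Ln with all Li subjective literals), W is an S-world view of Π ∪ C iff W is an S-world view of Π and W ⊨ C. -/

import Mathlib

open scoped Classical

/-- Propositional modal formulas over atoms `α`. -/
inductive Formula (α : Type) : Type
  | bot  : Formula α
  | top  : Formula α
  | atom : α → Formula α
  | and  : Formula α → Formula α → Formula α
  | or   : Formula α → Formula α → Formula α
  | imp  : Formula α → Formula α → Formula α
  | K    : Formula α → Formula α

namespace Formula

variable {α : Type}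

/-- default negation: `not F := F → ⊥` -/
def neg (F : Formula α) : Formula α := imp F bot

/-- `M F := not K not F` -/
def M (F : Formula α) : Formula α := neg (K (neg F))

/-- classical (S5/KD45-style) belief satisfaction `⟨W,I⟩ ⊨ F` -/
def sat (W : Set (Set α)) : Set α → Formula α → Prop
  | _, .bot => False
  | _, .top => True
  | I, .atom a => a ∈ I
  | I, .and F G => sat W I F ∧ sat W I G
  | I, .or F G => sat W I F ∨ sat W I G
  | I, .imp F G => sat W I F → sat W I G
  | _, .K F => ∀ I' ∈ W, sat W I' F

/-- `W ⊨ F` -/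
def wsat (W : Set (Set α)) (F : Formula α) : Prop := ∀ I ∈ W, sat W I F

/-- here-and-there satisfaction (used on objective formulas: reducts are `K`-free) -/
def htSat : Set α → Set α → Formula α → Prop
  | _, _, .bot => False
  | _, _, .top => True
  | H, _, .atom a => a ∈ H
  | H, T, .and F G => htSat H T F ∧ htSat H T G
  | H, T, .or F G => htSat H T F ∨ htSat H T G
  | H, T, .imp F G => (htSat H T F → htSat H T G) ∧ (htSat T T F → htSat T T G)
  | _, _, .K _ => False

/-- stable (equilibrium) models of an objective theory -/
def stableModel (Γ : Set (Formula α)) (I : Set α) : Prop :=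
  (∀ F ∈ Γ, htSat I I F) ∧ ∀ H : Set α, H ⊂ I → ∃ F ∈ Γ, ¬ htSat H I F

def stableModels (Γ : Set (Formula α)) : Set (Set α) := { I | stableModel Γ I }

/-- G94 reduct: each maximal subformula `K G` is replaced by `⊤` if `W ⊨ K G`, else by `⊥`. -/
noncomputable def g94Reduct (W : Set (Set α)) : Formula α → Formula α
  | .bot => bot
  | .top => top
  | .atom a => atom a
  | .and F G => and (g94Reduct W F) (g94Reduct W G)
  | .or F G => or (g94Reduct W F) (g94Reduct W G)
  | .imp F G => imp (g94Reduct W F) (g94Reduct W G)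
  | .K F => if ∀ I ∈ W, sat W I F then top else bot

/-- G94 world views -/
def G94wv (Γ : Set (Formula α)) (W : Set (Set α)) : Prop :=
  W.Nonempty ∧ W = stableModels ((g94Reduct W) '' Γ)

/-- K15 reduct: each maximal subformula `K F` is replaced by `F` if `W ⊨ K F`, else by `⊥`. -/
noncomputable def k15Reduct (W : Set (Set α)) : Formula α → Formula α
  | .bot => bot
  | .top => top
  | .atom a => atom a
  | .and F G => and (k15Reduct W F) (k15Reduct W G)
  | .or F G => or (k15Reduct W F) (k15Reduct W G)
  | .imp F G => imp (k15Reduct W F) (k15Reduct W G)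
  | .K F => if ∀ I ∈ W, sat W I F then F else bot

/-- K15 world views -/
def K15wv (Γ : Set (Formula α)) (W : Set (Set α)) : Prop :=
  W.Nonempty ∧ W = stableModels ((k15Reduct W) '' Γ)

end Formula

/-- Objective literals: truth constants, atoms, and atoms under one or two default negations. -/
inductive OLit (α : Type) : Type
  | otop : OLit α
  | obot : OLit α
  | atom : α → OLit α
  | natom : α → OLit α
  | nnatom : α → OLit α

/-- Literals: objective literals and subjective literals `K l`, `not K l`, `not not K l`. -/
inductive Lit (α : Type) : Type
  | obj : OLit α → Lit α
  | k : OLit α → Lit α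
  | nk : OLit α → Lit α
  | nnk : OLit α → Lit α

/-- A rule `l₁ ∨ … ∨ lₘ ← L₁, …, Lₙ`. -/
structure Rule (α : Type) : Type where
  head : List (OLit α)
  body : List (Lit α)

namespace Rule

variable {α : Type}

def OLitToF : OLit α → Formula α
  | .otop => Formula.top
  | .obot => Formula.bot
  | .atom a => Formula.atom a
  | .natom a => Formula.neg (Formula.atom a)
  | .nnatom a => Formula.neg (Formula.neg (Formula.atom a))

def LitToF : Lit α → Formula α
  | .obj l => OLitToF l
  | .k l => Formula.K (OLitToF l)
  | .nk l => Formula.neg (Formula.K (OLitToF l))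
  | .nnk l => Formula.neg (Formula.neg (Formula.K (OLitToF l)))

/-- a rule as the formula `head ← body` -/
def toF (r : Rule α) : Formula α :=
  Formula.imp (r.body.foldr (fun L G => Formula.and (LitToF L) G) Formula.top)
              (r.head.foldr (fun l G => Formula.or (OLitToF l) G) Formula.bot)

def OLitAtoms : OLit α → Set α
  | .otop => ∅
  | .obot => ∅
  | .atom a => {a}
  | .natom a => {a}
  | .nnatom a => {a}

def LitAtoms : Lit α → Set α
  | .obj l => OLitAtoms l
  | .k l => OLitAtoms l
  | .nk l => OLitAtoms l
  | .nnk l => OLitAtoms l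

/-- all atoms occurring in a rule -/
def atoms (r : Rule α) : Set α :=
  {a | ∃ l ∈ r.head, a ∈ OLitAtoms l} ∪ {a | ∃ L ∈ r.body, a ∈ LitAtoms L}

/-- atoms occurring in the head -/
def headAtoms (r : Rule α) : Set α := {a | ∃ l ∈ r.head, a ∈ OLitAtoms l}

/-- atoms occurring in objective literals of the body -/
def bodyObjAtoms (r : Rule α) : Set α :=
  {a | ∃ l : OLit α, Lit.obj l ∈ r.body ∧ a ∈ OLitAtoms l}

def isSubj : Lit α → Prop
  | .obj _ => False
  | _ => True

/-- a subjective constraint: empty head and only subjective body literals -/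
def isSubjConstraint (r : Rule α) : Prop :=
  r.head = [] ∧ ∀ L ∈ r.body, isSubj L

/-- an objective rule: no subjective body literals -/
def isObjective (r : Rule α) : Prop := ∀ L ∈ r.body, ¬ isSubj L

end Rule

namespace Rule

variable {α : Type}

/-- `U` is an epistemic splitting set of Π -/
def splittingSet (U : Set α) (P : Set (Rule α)) : Prop :=
  ∀ r ∈ P, r.atoms ⊆ U ∨ (r.headAtoms ∪ r.bodyObjAtoms) ∩ U = ∅

/-- the subjective reduct of a literal w.r.t. `W` and signature `U` -/
noncomputable def litReduct (W : Set (Set α)) (U : Set α) (L : Lit α) : Lit α :=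
  if isSubj L ∧ LitAtoms L ⊆ U then
    (if Formula.wsat W (LitToF L) then Lit.obj OLit.otop else Lit.obj OLit.obot)
  else L

/-- the subjective reduct `E_U(T, W)` of the top program -/
noncomputable def eReduct (W : Set (Set α)) (U : Set α) (T : Set (Rule α)) : Set (Rule α) :=
  (fun r : Rule α => Rule.mk r.head (r.body.map (litReduct W U))) '' T

/-- join of world views -/
def joinW (Wb Wt : Set (Set α)) : Set (Set α) :=
  {I | ∃ Ib ∈ Wb, ∃ It ∈ Wt, I = Ib ∪ It}

end Rule

/-- a semantics `S` satisfies epistemic splitting -/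
def EpistemicSplitting {α : Type} (S : Set (Rule α) → Set (Set α) → Prop) : Prop :=
  ∀ (P : Set (Rule α)) (U : Set α), Rule.splittingSet U P →
    ∀ B T : Set (Rule α), B ∪ T = P → B ∩ T = ∅ →
      (∀ r ∈ B, r.atoms ⊆ U) →
      (∀ r ∈ T, (r.headAtoms ∪ r.bodyObjAtoms) ∩ U = ∅) →
      ∀ W : Set (Set α),
        (S P W ↔ ∃ Wb Wt : Set (Set α),
            S B Wb ∧ S (Rule.eReduct Wb U T) Wt ∧ W = Rule.joinW Wb Wt)

/-- a semantics `S` is supra-ASP: on objective programs its world views are exactly the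
(nonempty) collections of all stable models -/
def SupraASP {α : Type} (S : Set (Rule α) → Set (Set α) → Prop) : Prop :=
  ∀ P : Set (Rule α), (∀ r ∈ P, r.isObjective) →
    ∀ W : Set (Set α),
      (S P W ↔ (W.Nonempty ∧ W = Formula.stableModels (Rule.toF '' P)))

/-- a semantics `S` satisfies subjective constraint monotonicity -/
def SubjConstraintMonotonicity {α : Type} (S : Set (Rule α) → Set (Set α) → Prop) : Prop :=
  ∀ (P C : Set (Rule α)), (∀ r ∈ C, r.isSubjConstraint) →
    ∀ W : Set (Set α),
      (S (P ∪ C) W ↔ (S P W ∧ ∀ r ∈ C, Formula.wsat W r.toF))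

section AuxLemmas

variable {α : Type}

lemma aux_sat_and {W : Set (Set α)} {I : Set α} {F G : Formula α} :
    Formula.sat W I (Formula.and F G) ↔ Formula.sat W I F ∧ Formula.sat W I G := Iff.rfl

lemma aux_sat_imp {W : Set (Set α)} {I : Set α} {F G : Formula α} :
    Formula.sat W I (Formula.imp F G) ↔ (Formula.sat W I F → Formula.sat W I G) := Iff.rfl

lemma aux_sat_bot {W : Set (Set α)} {I : Set α} :
    Formula.sat W I (Formula.bot) ↔ False := Iff.rfl

lemma aux_sat_top {W : Set (Set α)} {I : Set α} :
    Formula.sat W I (Formula.top) ↔ True := Iff.rfl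

lemma aux_htSat_and {H T : Set α} {F G : Formula α} :
    Formula.htSat H T (Formula.and F G) ↔ Formula.htSat H T F ∧ Formula.htSat H T G := Iff.rfl

lemma aux_htSat_imp {H T : Set α} {F G : Formula α} :
    Formula.htSat H T (Formula.imp F G) ↔
      ((Formula.htSat H T F → Formula.htSat H T G) ∧
        (Formula.htSat T T F → Formula.htSat T T G)) := Iff.rfl

lemma aux_htSat_bot {H T : Set α} : Formula.htSat H T (Formula.bot) ↔ False := Iff.rfl

lemma aux_htSat_top {H T : Set α} : Formula.htSat H T (Formula.top) ↔ True := Iff.rfl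

lemma aux_sat_conj (W : Set (Set α)) (I : Set α) (bs : List (Lit α)) :
    Formula.sat W I (bs.foldr (fun L G => Formula.and (Rule.LitToF L) G) Formula.top)
      ↔ ∀ L ∈ bs, Formula.sat W I (Rule.LitToF L) := by
  induction bs with
  | nil =>
      simp only [List.foldr_nil, List.not_mem_nil, false_implies, implies_true, iff_true]
      trivial
  | cons L bs ih =>
      rw [List.foldr_cons, aux_sat_and, ih]
      constructor
      · rintro ⟨h1, h2⟩ L' hL'
        rcases List.mem_cons.1 hL' with rfl | h
        · exact h1
        · exact h2 L' h
      · intro h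
        exact ⟨h L List.mem_cons_self, fun L' hL' => h L' (List.mem_cons_of_mem _ hL')⟩

lemma aux_htSat_conj (H T : Set α) (bs : List (Lit α)) :
    Formula.htSat H T (bs.foldr (fun L G => Formula.and (Rule.LitToF L) G) Formula.top)
      ↔ ∀ L ∈ bs, Formula.htSat H T (Rule.LitToF L) := by
  induction bs with
  | nil =>
      simp only [List.foldr_nil, List.not_mem_nil, false_implies, implies_true, iff_true]
      trivial
  | cons L bs ih =>
      rw [List.foldr_cons, aux_htSat_and, ih]
      constructor
      · rintro ⟨h1, h2⟩ L' hL'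
        rcases List.mem_cons.1 hL' with rfl | h
        · exact h1
        · exact h2 L' h
      · intro h
        exact ⟨h L List.mem_cons_self, fun L' hL' => h L' (List.mem_cons_of_mem _ hL')⟩

lemma aux_subj_indep {L : Lit α} (h : Rule.isSubj L) (W : Set (Set α)) (I I' : Set α)
    (hs : Formula.sat W I (Rule.LitToF L)) : Formula.sat W I' (Rule.LitToF L) := by
  cases L with
  | obj l => exact h.elim
  | k l => exact hs
  | nk l => exact hs
  | nnk l => exact hs

lemma aux_constraint_top_cond {r : Rule α} (h : r.isSubjConstraint) (U : Set α) :
    (r.headAtoms ∪ r.bodyObjAtoms) ∩ U = ∅ := by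
  obtain ⟨hh, hb⟩ := h
  have h1 : r.headAtoms = ∅ := by
    ext a
    simp [Rule.headAtoms, hh]
  have h2 : r.bodyObjAtoms = ∅ := by
    ext a
    simp only [Rule.bodyObjAtoms, Set.mem_setOf_eq, Set.mem_empty_iff_false, iff_false]
    rintro ⟨l, hl, -⟩
    have := hb _ hl
    simp [Rule.isSubj] at this
  rw [h1, h2]
  simp

lemma aux_wsat_constraint_of_exists {r : Rule α} (hr : r.isSubjConstraint) {W : Set (Set α)}
    (h : ∃ L ∈ r.body, ¬ Formula.wsat W (Rule.LitToF L)) : Formula.wsat W r.toF := by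
  obtain ⟨L, hL, hnw⟩ := h
  intro I hI
  unfold Rule.toF
  rw [aux_sat_imp]
  intro hbody
  exfalso
  apply hnw
  intro I' hI'
  exact aux_subj_indep (hr.2 L hL) W I I' ((aux_sat_conj W I r.body).1 hbody L hL)

lemma aux_exists_not_wsat {r : Rule α} (hr : r.isSubjConstraint) {W : Set (Set α)}
    (hW : W.Nonempty) (h : Formula.wsat W r.toF) :
    ∃ L ∈ r.body, ¬ Formula.wsat W (Rule.LitToF L) := by
  obtain ⟨I0, hI0⟩ := hW
  have hs := h I0 hI0
  unfold Rule.toF at hs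
  rw [hr.1, List.foldr_nil, aux_sat_imp] at hs
  by_contra hall
  push_neg at hall
  exact hs ((aux_sat_conj W I0 r.body).2 fun L hL => hall L hL I0 hI0)

lemma aux_litReduct_subj {L : Lit α} (h : Rule.isSubj L) {U : Set α} (hU : Rule.LitAtoms L ⊆ U)
    (W : Set (Set α)) :
    Rule.litReduct W U L =
      if Formula.wsat W (Rule.LitToF L) then Lit.obj OLit.otop else Lit.obj OLit.obot := by
  unfold Rule.litReduct
  rw [if_pos ⟨h, hU⟩]

lemma aux_reduct_taut {r : Rule α} (hr : r.isSubjConstraint) {W : Set (Set α)}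
    (h : ∃ L ∈ r.body, ¬ Formula.wsat W (Rule.LitToF L)) (H T : Set α) :
    Formula.htSat H T
      (Rule.toF (Rule.mk r.head (r.body.map (Rule.litReduct W Set.univ)))) := by
  obtain ⟨L, hL, hnw⟩ := h
  have hmem : Lit.obj OLit.obot ∈ r.body.map (Rule.litReduct W Set.univ) := by
    refine List.mem_map.2 ⟨L, hL, ?_⟩
    rw [aux_litReduct_subj (hr.2 L hL) (Set.subset_univ _) W, if_neg hnw]
  have hbad : ∀ H' T' : Set α,
      ¬ Formula.htSat H' T' ((r.body.map (Rule.litReduct W Set.univ)).foldr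
          (fun L G => Formula.and (Rule.LitToF L) G) Formula.top) := by
    intro H' T' hc
    exact (aux_htSat_conj H' T' _).1 hc _ hmem
  exact ⟨fun hc => absurd hc (hbad H T), fun hc => absurd hc (hbad T T)⟩

lemma aux_reduct_unsat {r : Rule α} (hr : r.isSubjConstraint) {W : Set (Set α)}
    (h : ∀ L ∈ r.body, Formula.wsat W (Rule.LitToF L)) (I : Set α) :
    ¬ Formula.htSat I I
        (Rule.toF (Rule.mk r.head (r.body.map (Rule.litReduct W Set.univ)))) := by
  intro hs
  have hconj : Formula.htSat I I ((r.body.map (Rule.litReduct W Set.univ)).foldr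
      (fun L G => Formula.and (Rule.LitToF L) G) Formula.top) := by
    refine (aux_htSat_conj I I _).2 ?_
    rintro L' hL'
    obtain ⟨L0, h0, rfl⟩ := List.mem_map.1 hL'
    rw [aux_litReduct_subj (hr.2 L0 h0) (Set.subset_univ _) W, if_pos (h L0 h0)]
    trivial
  have hhead : Formula.htSat I I
      (r.head.foldr (fun l G => Formula.or (Rule.OLitToF l) G) Formula.bot) := hs.1 hconj
  rw [hr.1, List.foldr_nil] at hhead
  exact hhead

lemma aux_sm_of_tauts {Γ : Set (Formula α)}
    (h : ∀ F ∈ Γ, ∀ H T : Set α, Formula.htSat H T F) :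
    Formula.stableModels Γ = {∅} := by
  ext I
  simp only [Formula.stableModels, Formula.stableModel, Set.mem_setOf_eq,
    Set.mem_singleton_iff]
  constructor
  · rintro ⟨-, hmin⟩
    by_contra hne
    have hss : (∅ : Set α) ⊂ I := Set.empty_ssubset.2 (Set.nonempty_iff_ne_empty.2 hne)
    obtain ⟨F, hF, hns⟩ := hmin ∅ hss
    exact hns (h F hF ∅ I)
  · rintro rfl
    exact ⟨fun F hF => h F hF ∅ ∅,
      fun H hH => absurd (Set.subset_empty_iff.1 hH.subset) hH.ne⟩

lemma aux_sm_empty {Γ : Set (Formula α)} {F : Formula α} (hF : F ∈ Γ)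
    (h : ∀ I : Set α, ¬ Formula.htSat I I F) :
    Formula.stableModels Γ = ∅ := by
  ext I
  simp only [Formula.stableModels, Set.mem_setOf_eq, Set.mem_empty_iff_false, iff_false]
  rintro ⟨hall, -⟩
  exact h I (hall F hF)

lemma aux_joinW_singleton (Wb : Set (Set α)) : Rule.joinW Wb {∅} = Wb := by
  ext I
  simp only [Rule.joinW, Set.mem_setOf_eq]
  constructor
  · rintro ⟨Ib, hIb, It, rfl, rfl⟩
    simpa using hIb
  · intro hI
    exact ⟨I, hI, ∅, rfl, (Set.union_empty I).symm⟩

lemma aux_joinW_left_singleton (Wt : Set (Set α)) : Rule.joinW {∅} Wt = Wt := by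
  ext I
  simp only [Rule.joinW, Set.mem_setOf_eq]
  constructor
  · rintro ⟨Ib, rfl, It, hIt, rfl⟩
    simpa using hIt
  · intro hI
    exact ⟨∅, rfl, I, hI, (Set.empty_union I).symm⟩

lemma aux_joinW_empty_right (Wb : Set (Set α)) : Rule.joinW Wb ∅ = ∅ := by
  ext I
  simp [Rule.joinW]

lemma aux_eReduct_objective {C : Set (Rule α)} (hC : ∀ r ∈ C, r.isSubjConstraint)
    (W : Set (Set α)) : ∀ r' ∈ Rule.eReduct W Set.univ C, r'.isObjective := by
  rintro r' ⟨r, hr, rfl⟩ L hL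
  obtain ⟨L0, h0, rfl⟩ := List.mem_map.1 hL
  rw [aux_litReduct_subj ((hC r hr).2 L0 h0) (Set.subset_univ _) W]
  split_ifs <;> exact fun hs => hs

lemma aux_splittingSet_univ (P : Set (Rule α)) : Rule.splittingSet Set.univ P :=
  fun _ _ => Or.inl (Set.subset_univ _)

lemma aux_splittingSet_empty (P : Set (Rule α)) : Rule.splittingSet ∅ P :=
  fun _ _ => Or.inr (Set.inter_empty _)

/-- the special rule `⊥ ← K ⊥` -/
def cstarRule (α : Type) : Rule α := ⟨[], [Lit.k OLit.obot]⟩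

/-- the rule `⊥ ← ⊤` -/
def topRule (α : Type) : Rule α := ⟨[], [Lit.obj OLit.otop]⟩

/-- the rule `⊥ ← ⊥` -/
def botRule (α : Type) : Rule α := ⟨[], [Lit.obj OLit.obot]⟩

lemma aux_cstar_constraint : (cstarRule α).isSubjConstraint := by
  refine ⟨rfl, ?_⟩
  intro L hL
  have hL' : L = Lit.k OLit.obot := by simpa [cstarRule] using hL
  subst hL'
  trivial

lemma aux_cstar_atoms : (cstarRule α).atoms ⊆ (∅ : Set α) := by
  intro a ha
  simp [cstarRule, Rule.atoms, Rule.LitAtoms, Rule.OLitAtoms] at ha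

lemma aux_singleton_obj {l : OLit α} :
    ∀ r ∈ ({(⟨[], [Lit.obj l]⟩ : Rule α)} : Set (Rule α)), r.isObjective := by
  rintro r rfl L hL
  have hL' : L = Lit.obj l := by simpa using hL
  subst hL'
  exact fun hs => hs

lemma aux_topRule_obj : ∀ r ∈ ({topRule α} : Set (Rule α)), r.isObjective := by
  unfold topRule
  exact aux_singleton_obj

lemma aux_botRule_obj : ∀ r ∈ ({botRule α} : Set (Rule α)), r.isObjective := by
  unfold botRule
  exact aux_singleton_obj

lemma aux_topRule_unsat (I : Set α) : ¬ Formula.htSat I I (Rule.toF (topRule α)) :=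
  fun h => (h.1 ⟨trivial, trivial⟩ : False)

lemma aux_botRule_taut (H T : Set α) : Formula.htSat H T (Rule.toF (botRule α)) :=
  ⟨fun h => h.1, fun h => h.1⟩

lemma aux_sm_topRule :
    Formula.stableModels (Rule.toF '' ({topRule α} : Set (Rule α))) = ∅ :=
  aux_sm_empty ⟨topRule α, rfl, rfl⟩ aux_topRule_unsat

lemma aux_sm_botRule :
    Formula.stableModels (Rule.toF '' ({botRule α} : Set (Rule α))) = {∅} := by
  apply aux_sm_of_tauts
  rintro F ⟨r, rfl, rfl⟩ H T
  exact aux_botRule_taut H T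

lemma aux_sm_emptyProg :
    Formula.stableModels (Rule.toF '' (∅ : Set (Rule α))) = {∅} := by
  apply aux_sm_of_tauts
  rintro F ⟨r, hr, -⟩
  exact absurd hr (Set.notMem_empty r)

lemma aux_wsat_cstar (W : Set (Set α)) :
    Formula.wsat W (Rule.LitToF (Lit.k (OLit.obot : OLit α))) ↔ W = ∅ := by
  constructor
  · intro h
    by_contra hne
    obtain ⟨I, hI⟩ := Set.nonempty_iff_ne_empty.2 hne
    exact h I hI I hI
  · rintro rfl I hI
    exact absurd hI (Set.notMem_empty I)

lemma aux_eReduct_cstar (W : Set (Set α)) (U : Set α) :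
    Rule.eReduct W U {cstarRule α} = {if W = ∅ then topRule α else botRule α} := by
  unfold Rule.eReduct
  rw [Set.image_singleton]
  congr 1
  show Rule.mk [] ([Lit.k (OLit.obot : OLit α)].map (Rule.litReduct W U)) = _
  have hsub : Rule.LitAtoms (Lit.k (OLit.obot : OLit α)) ⊆ U := by
    intro a ha
    simp [Rule.LitAtoms, Rule.OLitAtoms] at ha
  rw [List.map_singleton, aux_litReduct_subj (by trivial) hsub W]
  by_cases hW : W = ∅
  · rw [if_pos ((aux_wsat_cstar W).2 hW), if_pos hW]
    rfl
  · rw [if_neg (fun h => hW ((aux_wsat_cstar W).1 h)), if_neg hW]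
    rfl

lemma aux_no_empty {α : Type} (S : Set (Rule α) → Set (Set α) → Prop)
    (hsplit : EpistemicSplitting S) (hsupra : SupraASP S) :
    ∀ P : Set (Rule α), ¬ S P ∅ := by
  have hStop : ∀ Wt : Set (Set α), ¬ S {topRule α} Wt := by
    intro Wt h
    obtain ⟨hne, hsm⟩ := (hsupra _ aux_topRule_obj Wt).1 h
    rw [aux_sm_topRule] at hsm
    exact hne.ne_empty hsm
  have hSbot : ∀ Wt : Set (Set α), S {botRule α} Wt ↔ Wt = {∅} := by
    intro Wt
    rw [hsupra _ aux_botRule_obj Wt, aux_sm_botRule]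
    constructor
    · exact fun h => h.2
    · rintro rfl
      exact ⟨Set.singleton_nonempty _, rfl⟩
  have hSempty : ∀ Wb : Set (Set α), S (∅ : Set (Rule α)) Wb ↔ Wb = {∅} := by
    intro Wb
    rw [hsupra _ (fun r hr => absurd hr (Set.notMem_empty r)) Wb, aux_sm_emptyProg]
    constructor
    · exact fun h => h.2
    · rintro rfl
      exact ⟨Set.singleton_nonempty _, rfl⟩
  intro P hP
  by_cases hmem : cstarRule α ∈ P
  · -- split (univ, P \ {c*}, {c*}) of P
    have hiff := hsplit P Set.univ (aux_splittingSet_univ P) (P \ {cstarRule α}) {cstarRule α}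
      (Set.diff_union_of_subset (Set.singleton_subset_iff.2 hmem))
      (Set.eq_empty_iff_forall_notMem.2 (by
        rintro x ⟨⟨-, hx2⟩, hx3⟩
        exact hx2 hx3))
      (fun r _ => Set.subset_univ _)
      (fun r hr => by
        rw [Set.mem_singleton_iff] at hr
        subst hr
        exact aux_constraint_top_cond aux_cstar_constraint _)
      ∅
    obtain ⟨Wb, Wt, hWb, hWt, hj⟩ := hiff.1 hP
    rw [aux_eReduct_cstar] at hWt
    by_cases hWbe : Wb = ∅
    · rw [if_pos hWbe] at hWt
      exact hStop Wt hWt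
    · rw [if_neg hWbe] at hWt
      rw [hSbot] at hWt
      rw [hWt, aux_joinW_singleton] at hj
      exact hWbe hj.symm
  · -- forced value of `S {c*}`
    have hSc : ∀ Wb : Set (Set α), S ({cstarRule α} : Set (Rule α)) Wb ↔ Wb = {∅} := by
      intro Wb
      have hiffc := hsplit {cstarRule α} ∅ (aux_splittingSet_empty _) ∅ {cstarRule α}
        (Set.empty_union _) (Set.empty_inter _)
        (fun r hr => absurd hr (Set.notMem_empty r))
        (fun r _ => Set.inter_empty _) Wb
      rw [hiffc]
      constructor
      · rintro ⟨Wb', Wt', hWb', hWt', rfl⟩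
        rw [hSempty] at hWb'
        subst hWb'
        rw [aux_eReduct_cstar, if_neg (Set.singleton_ne_empty _)] at hWt'
        rw [hSbot] at hWt'
        subst hWt'
        exact aux_joinW_singleton _
      · rintro rfl
        refine ⟨{∅}, {∅}, (hSempty _).2 rfl, ?_, (aux_joinW_singleton _).symm⟩
        rw [aux_eReduct_cstar, if_neg (Set.singleton_ne_empty _)]
        exact (hSbot _).2 rfl
    -- from `S P ∅` get `S (eReduct {∅} ∅ P) ∅`
    have hiffP := hsplit P ∅ (aux_splittingSet_empty _) ∅ P
      (Set.empty_union _) (Set.empty_inter _)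
      (fun r hr => absurd hr (Set.notMem_empty r))
      (fun r _ => Set.inter_empty _) ∅
    obtain ⟨Wb1, Wt1, hWb1, hWt1, hj1⟩ := hiffP.1 hP
    rw [hSempty] at hWb1
    subst hWb1
    rw [aux_joinW_left_singleton] at hj1
    rw [← hj1] at hWt1
    -- hence `S (P ∪ {c*}) ∅`
    have hdisj : ({cstarRule α} : Set (Rule α)) ∩ P = ∅ :=
      Set.eq_empty_iff_forall_notMem.2 (by
        rintro x ⟨hx1, hx2⟩
        rw [Set.mem_singleton_iff] at hx1
        subst hx1
        exact hmem hx2)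
    have hiffQ := hsplit (P ∪ {cstarRule α}) ∅ (aux_splittingSet_empty _) {cstarRule α} P
      (Set.union_comm _ _) hdisj
      (fun r hr => by
        rw [Set.mem_singleton_iff] at hr
        subst hr
        exact aux_cstar_atoms)
      (fun r _ => Set.inter_empty _) ∅
    have hSQ : S (P ∪ {cstarRule α}) ∅ := by
      apply hiffQ.2
      exact ⟨{∅}, ∅, (hSc _).2 rfl, hWt1, (aux_joinW_empty_right _).symm⟩
    -- contradiction via split (univ, P, {c*}) of P ∪ {c*}
    have hdisj2 : P ∩ ({cstarRule α} : Set (Rule α)) = ∅ :=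
      Set.eq_empty_iff_forall_notMem.2 (by
        rintro x ⟨hx1, hx2⟩
        rw [Set.mem_singleton_iff] at hx2
        subst hx2
        exact hmem hx1)
    have hiffd := hsplit (P ∪ {cstarRule α}) Set.univ (aux_splittingSet_univ _) P {cstarRule α}
      rfl hdisj2
      (fun r _ => Set.subset_univ _)
      (fun r hr => by
        rw [Set.mem_singleton_iff] at hr
        subst hr
        exact aux_constraint_top_cond aux_cstar_constraint _)
      ∅
    obtain ⟨Wb2, Wt2, hWb2, hWt2, hj2⟩ := hiffd.1 hSQ
    rw [aux_eReduct_cstar] at hWt2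
    by_cases hWb2e : Wb2 = ∅
    · rw [if_pos hWb2e] at hWt2
      exact hStop _ hWt2
    · rw [if_neg hWb2e] at hWt2
      rw [hSbot] at hWt2
      rw [hWt2, aux_joinW_singleton] at hj2
      exact hWb2e hj2.symm

end AuxLemmas

/-- every (supra-ASP) semantics satisfying epistemic splitting satisfies
subjective constraint monotonicity. -/
theorem splitting_implies_constraint_monotonicity {α : Type}
    (S : Set (Rule α) → Set (Set α) → Prop)
    (hsplit : EpistemicSplitting S) (hsupra : SupraASP S) :
    SubjConstraintMonotonicity S := by
  have hno := aux_no_empty S hsplit hsupra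
  intro P C hC W
  have hdisj1 : (P \ C) ∩ (P ∩ C) = ∅ :=
    Set.eq_empty_iff_forall_notMem.2 (by
      rintro x ⟨⟨-, hx2⟩, -, hx4⟩
      exact hx2 hx4)
  have hdisj2 : (P \ C) ∩ C = ∅ :=
    Set.eq_empty_iff_forall_notMem.2 (by
      rintro x ⟨⟨-, hx2⟩, hx3⟩
      exact hx2 hx3)
  have hiff1 := hsplit P Set.univ (aux_splittingSet_univ P) (P \ C) (P ∩ C)
      (Set.diff_union_inter P C) hdisj1 (fun r _ => Set.subset_univ _)
      (fun r hr => aux_constraint_top_cond (hC r hr.2) _) W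
  have hiff2 := hsplit (P ∪ C) Set.univ (aux_splittingSet_univ _) (P \ C) C
      (Set.diff_union_self) hdisj2 (fun r _ => Set.subset_univ _)
      (fun r hr => aux_constraint_top_cond (hC r hr) _) W
  constructor
  · intro hPC
    rcases Set.eq_empty_or_nonempty W with rfl | hWne
    · exact absurd hPC (hno _)
    obtain ⟨Wb, Wt, hWb, hWt, hj⟩ := hiff2.1 hPC
    obtain ⟨hWtne, hWtsm⟩ := (hsupra _ (aux_eReduct_objective hC Wb) Wt).1 hWt
    have hex : ∀ r ∈ C, ∃ L ∈ r.body, ¬ Formula.wsat Wb (Rule.LitToF L) := by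
      intro r hr
      by_contra hcon
      push_neg at hcon
      have hsm0 : Formula.stableModels (Rule.toF '' Rule.eReduct Wb Set.univ C) = ∅ :=
        aux_sm_empty ⟨_, ⟨r, hr, rfl⟩, rfl⟩ (aux_reduct_unsat (hC r hr) hcon)
      exact hWtne.ne_empty (hWtsm.trans hsm0)
    have hWt1 : Wt = {∅} := by
      rw [hWtsm]
      apply aux_sm_of_tauts
      rintro F ⟨r', ⟨r, hr, rfl⟩, rfl⟩ H T
      exact aux_reduct_taut (hC r hr) (hex r hr) H T
    rw [hWt1, aux_joinW_singleton] at hj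
    subst hj
    have hsatC : ∀ r ∈ C, Formula.wsat W r.toF :=
      fun r hr => aux_wsat_constraint_of_exists (hC r hr) (hex r hr)
    refine ⟨?_, hsatC⟩
    apply hiff1.2
    refine ⟨W, {∅}, hWb, ?_, (aux_joinW_singleton W).symm⟩
    apply (hsupra _ (aux_eReduct_objective (fun r hr => hC r hr.2) W) {∅}).2
    refine ⟨Set.singleton_nonempty _, ?_⟩
    symm
    apply aux_sm_of_tauts
    rintro F ⟨r', ⟨r, hr, rfl⟩, rfl⟩ H T
    exact aux_reduct_taut (hC r hr.2)
      (aux_exists_not_wsat (hC r hr.2) hWne (hsatC r hr.2)) H T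
  · rintro ⟨hP, hsatC⟩
    rcases Set.eq_empty_or_nonempty W with rfl | hWne
    · exact absurd hP (hno _)
    obtain ⟨Wb, Wt, hWb, hWt, hj⟩ := hiff1.1 hP
    obtain ⟨hWtne, hWtsm⟩ :=
      (hsupra _ (aux_eReduct_objective (fun r hr => hC r hr.2) Wb) Wt).1 hWt
    have hex : ∀ r ∈ P ∩ C, ∃ L ∈ r.body, ¬ Formula.wsat Wb (Rule.LitToF L) := by
      intro r hr
      by_contra hcon
      push_neg at hcon
      have hsm0 : Formula.stableModels (Rule.toF '' Rule.eReduct Wb Set.univ (P ∩ C)) = ∅ :=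
        aux_sm_empty ⟨_, ⟨r, hr, rfl⟩, rfl⟩ (aux_reduct_unsat (hC r hr.2) hcon)
      exact hWtne.ne_empty (hWtsm.trans hsm0)
    have hWt1 : Wt = {∅} := by
      rw [hWtsm]
      apply aux_sm_of_tauts
      rintro F ⟨r', ⟨r, hr, rfl⟩, rfl⟩ H T
      exact aux_reduct_taut (hC r hr.2) (hex r hr) H T
    rw [hWt1, aux_joinW_singleton] at hj
    subst hj
    apply hiff2.2
    refine ⟨W, {∅}, hWb, ?_, (aux_joinW_singleton W).symm⟩
    apply (hsupra _ (aux_eReduct_objective hC W) {∅}).2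
    refine ⟨Set.singleton_nonempty _, ?_⟩
    symm
    apply aux_sm_of_tauts
    rintro F ⟨r', ⟨r, hr, rfl⟩, rfl⟩ H T
    exact aux_reduct_taut (hC r hr)
      (aux_exists_not_wsat (hC r hr) hWne (hsatC r hr)) H T
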